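/- Let $G \in \mathbb{F}_3^{k\times n}$ be a matrix of rank $k$ with column set $B$, and let $C$ be the row space of $G$. Then $C$ is a linear trifferent code if and only if $\{0\} \cup B \cup (-B)$ is an affine 2-blocking set in $\mathbb{F}_3^k$. -/

import Mathlib

namespace TB

open Matrix Module Submodule Set


variable {k n : ℕ}

def lf (u : Fin k → ZMod 3) : (Fin k → ZMod 3) →ₗ[ZMod 3] ZMod 3 where
  toFun w := ∑ j, u j * w j
  map_add' x y := by simp [mul_add, Finset.sum_add_distrib]
  map_smul' c x := by simp [Finset.mul_sum, mul_left_comm]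

lemma lf_apply_col (G : Matrix (Fin k) (Fin n) (ZMod 3)) (u : Fin k → ZMod 3) (j : Fin n) :
    lf u (fun i => G i j) = Matrix.vecMul u G j := by
  simp [lf, Matrix.vecMul, dotProduct]

lemma lf_ne_zero {u : Fin k → ZMod 3} (h : u ≠ 0) : lf u ≠ 0 := by
  intro h0
  apply h
  funext j
  have := congrFun (congrArg (fun (f : (Fin k → ZMod 3) →ₗ[ZMod 3] ZMod 3) => f.toFun) h0)
    (fun j' => if j' = j then 1 else 0)
  simpa [lf, mul_ite, Finset.sum_ite_eq] using this

lemma lf_add (u v : Fin k → ZMod 3) : lf (u + v) = lf u + lf v := by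
  ext w
  simp [lf, add_mul, Finset.sum_add_distrib]

lemma rows_indep (G : Matrix (Fin k) (Fin n) (ZMod 3)) (hrank : G.rank = k) :
    Function.Injective fun u : Fin k → ZMod 3 => Matrix.vecMul u G := by
  have : Function.Injective G.vecMul := by
    rw [Matrix.vecMul_injective_iff]
    rw [linearIndependent_iff_card_eq_finrank_span]
    rw [Set.finrank, ← Matrix.rank_eq_finrank_span_row, hrank, Fintype.card_fin]
  exact this

lemma cols_span (G : Matrix (Fin k) (Fin n) (ZMod 3)) (hrank : G.rank = k) :
    Submodule.span (ZMod 3) (Set.range fun j i => G i j) = ⊤ := by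
  have h1 : Submodule.span (ZMod 3) (Set.range Gᵀ) = ⊤ := by
    apply Submodule.eq_top_of_finrank_eq
    rw [show Set.range Gᵀ = Set.range G.col from rfl, ← Matrix.rank_eq_finrank_span_cols, hrank, Module.finrank_pi, Fintype.card_fin]
  have h2 : (fun j i => G i j) = Gᵀ := rfl
  rw [h2, h1]

lemma vanish_zero (G : Matrix (Fin k) (Fin n) (ZMod 3)) (hrank : G.rank = k)
    (f : (Fin k → ZMod 3) →ₗ[ZMod 3] ZMod 3) (h : ∀ j, f (fun i => G i j) = 0) : f = 0 := by
  refine LinearMap.ext fun w => ?_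
  have hw : w ∈ Submodule.span (ZMod 3) (Set.range fun j i => G i j) := by
    rw [cols_span G hrank]; trivial
  refine Submodule.span_induction ?_ ?_ ?_ ?_ hw
  · rintro _ ⟨j, rfl⟩; exact h j
  · simp
  · intro a b _ _ ha hb; simp [ha, hb]
  · intro c a _ ha; simp [ha]

theorem key (G : Matrix (Fin k) (Fin n) (ZMod 3)) (hrank : G.rank = k) :
    (∀ x ∈ Set.range fun u : Fin k → ZMod 3 => Matrix.vecMul u G,
     ∀ y ∈ Set.range fun u : Fin k → ZMod 3 => Matrix.vecMul u G,
     ∀ z ∈ Set.range fun u : Fin k → ZMod 3 => Matrix.vecMul u G,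
       x ≠ y → y ≠ z → x ≠ z →
         ∃ i : Fin n, ({x i, y i, z i} : Set (ZMod 3)) = Set.univ)
    ↔ (∀ f g : (Fin k → ZMod 3) →ₗ[ZMod 3] ZMod 3, f ≠ 0 → g ≠ 0 → f + g ≠ 0 →
        ∃ j, f (fun i => G i j) = g (fun i => G i j) ∧ f (fun i => G i j) ≠ 0) := by
  have hinj := rows_indep G hrank
  constructor
  · intro H f g hf hg hfg
    set u : Fin k → ZMod 3 := fun j => f (fun j' => if j = j' then 1 else 0) with hu_def
    set v : Fin k → ZMod 3 := fun j => g (fun j' => if j = j' then 1 else 0) with hv_def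
    have happ : ∀ (h : (Fin k → ZMod 3) →ₗ[ZMod 3] ZMod 3) (w : Fin k → ZMod 3) (i : Fin n),
        (∀ j, h (fun j' => if j = j' then 1 else 0) = w j) →
        Matrix.vecMul w G i = h (fun i' => G i' i) := by
      intro h w i hw
      rw [LinearMap.pi_apply_eq_sum_univ h (fun i' => G i' i)]
      simp only [Matrix.vecMul, dotProduct]
      refine Finset.sum_congr rfl fun j _ => ?_
      rw [hw j, smul_eq_mul, mul_comm]
    have hu : ∀ i, Matrix.vecMul u G i = f (fun i' => G i' i) :=
      fun i => happ f u i (fun j => rfl)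
    have hv : ∀ i, Matrix.vecMul v G i = g (fun i' => G i' i) :=
      fun i => happ g v i (fun j => rfl)
    have hzero : ∀ (h : (Fin k → ZMod 3) →ₗ[ZMod 3] ZMod 3),
        (∀ j, h (fun j' => if j = j' then (1 : ZMod 3) else 0) = 0) → h = 0 := by
      intro h h0
      refine LinearMap.ext fun w => ?_
      rw [LinearMap.pi_apply_eq_sum_univ h w]
      simp [h0]
    have hu0 : u ≠ 0 := fun h0 => hf (hzero f fun j => by
      have := congrFun h0 j; simpa using this)
    have hv0 : v ≠ 0 := fun h0 => hg (hzero g fun j => by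
      have := congrFun h0 j; simpa using this)
    have huv : u + v ≠ 0 := fun h0 => hfg (hzero (f + g) fun j => by
      have := congrFun h0 j; simpa using this)
    obtain ⟨i, hi⟩ := H (Matrix.vecMul u G) ⟨u, rfl⟩ (Matrix.vecMul 0 G) ⟨0, rfl⟩
      (Matrix.vecMul (-v) G) ⟨-v, rfl⟩
      (fun h => hu0 (by simpa using hinj h))
      (fun h => hv0 (by simpa [eq_comm, neg_eq_zero] using hinj h))
      (fun h => huv (by have := hinj h; rwa [← add_eq_zero_iff_eq_neg] at this))
    have hmem : ∀ t : ZMod 3, t = Matrix.vecMul u G i ∨ t = Matrix.vecMul 0 G i ∨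
        t = Matrix.vecMul (-v) G i := by
      intro t
      have := hi ▸ Set.mem_univ t
      simpa [Set.mem_insert_iff] using this
    have h0i : Matrix.vecMul (0 : Fin k → ZMod 3) G i = 0 := by simp
    have hni : Matrix.vecMul (-v) G i = -(Matrix.vecMul v G i) := by
      rw [Matrix.neg_vecMul]; rfl
    rw [h0i, hni] at hmem
    have dec3 : ∀ a c : ZMod 3, (∀ t : ZMod 3, t = a ∨ t = 0 ∨ t = -c) → a = c ∧ a ≠ 0 := by
      decide
    obtain ⟨h1, h2⟩ := dec3 (Matrix.vecMul u G i) (Matrix.vecMul v G i) hmem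
    exact ⟨i, by rw [← hu, ← hv, h1], by rw [← hu]; exact h2⟩
  · rintro H x ⟨p, rfl⟩ y ⟨q, rfl⟩ z ⟨r, rfl⟩ hxy hyz hxz
    have hpq : p - q ≠ 0 := fun h => hxy (by rw [sub_eq_zero] at h; rw [h])
    have hqr : q - r ≠ 0 := fun h => hyz (by rw [sub_eq_zero] at h; rw [h])
    obtain ⟨j, h1, h2⟩ := H (lf (p - q)) (lf (q - r)) (lf_ne_zero hpq) (lf_ne_zero hqr)
      (by rw [← lf_add]; exact lf_ne_zero (fun h => hxz (by
        have : p - r = 0 := by rw [← h]; ring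
        rw [sub_eq_zero] at this; rw [this])))
    simp only [lf_apply_col, Matrix.sub_vecMul, Pi.sub_apply] at h1 h2
    refine ⟨j, ?_⟩
    rw [Set.eq_univ_iff_forall]
    intro t
    simp only [Set.mem_insert_iff, Set.mem_singleton_iff]
    have dec4 : ∀ a b c t : ZMod 3, a - b = b - c → a - b ≠ 0 → t = a ∨ t = b ∨ t = c := by
      decide
    exact dec4 _ _ _ t h1 h2



theorem forward (G : Matrix (Fin k) (Fin n) (ZMod 3)) (hrank : G.rank = k)
    (hT : ∀ f g : (Fin k → ZMod 3) →ₗ[ZMod 3] ZMod 3, f ≠ 0 → g ≠ 0 → f + g ≠ 0 →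
        ∃ j, f (fun i => G i j) = g (fun i => G i j) ∧ f (fun i => G i j) ≠ 0)
    (hspan : Submodule.span (ZMod 3) (Set.range fun j i => G i j) = ⊤) :
    (∀ W : Submodule (ZMod 3) (Fin k → ZMod 3), Module.finrank (ZMod 3) W = k - 2 →
        ∀ x : Fin k → ZMod 3,
          ∃ b ∈ ({0} ∪ Set.range (fun j i => G i j) ∪
              -Set.range (fun j i => G i j) : Set (Fin k → ZMod 3)),
            b - x ∈ W) := by
  intro W hW x
  have hmem0 : (0 : Fin k → ZMod 3) ∈ ({0} ∪ Set.range (fun j i => G i j) ∪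
      -Set.range (fun j i => G i j) : Set (Fin k → ZMod 3)) := Or.inl (Or.inl rfl)
  have hmemc : ∀ j : Fin n, (fun i => G i j) ∈ ({0} ∪ Set.range (fun j i => G i j) ∪
      -Set.range (fun j i => G i j) : Set (Fin k → ZMod 3)) := fun j => Or.inl (Or.inr ⟨j, rfl⟩)
  have hmemnc : ∀ j : Fin n, (-fun i => G i j) ∈ ({0} ∪ Set.range (fun j i => G i j) ∪
      -Set.range (fun j i => G i j) : Set (Fin k → ZMod 3)) := fun j =>
    Or.inr (by rw [Set.mem_neg, neg_neg]; exact ⟨j, rfl⟩)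
  rcases Nat.lt_or_ge k 2 with hk | hk
  · -- degenerate case k ≤ 1
    have hW0 : W = ⊥ := by
      rw [← Submodule.finrank_eq_zero (R := ZMod 3) (M := Fin k → ZMod 3)]
      omega
    subst hW0
    simp only [Submodule.mem_bot, sub_eq_zero]
    by_cases hx : x = 0
    · exact ⟨0, hmem0, hx.symm⟩
    · -- x ≠ 0, so k = 1
      have hk1 : k = 1 := by
        have h1 : 0 < Module.finrank (ZMod 3) (Fin k → ZMod 3) := by
          rw [Module.finrank_pos_iff]
          exact ⟨⟨x, 0, hx⟩⟩
        rw [Module.finrank_pi, Fintype.card_fin] at h1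
        omega
      obtain ⟨j, hj⟩ : ∃ j, (fun i => G i j) ≠ (0 : Fin k → ZMod 3) := by
        by_contra hco
        push_neg at hco
        apply hx
        have hle : Submodule.span (ZMod 3) (Set.range fun j i => G i j) ≤ ⊥ := by
          rw [Submodule.span_le]
          rintro _ ⟨j, rfl⟩
          simp [hco j]
        have : x ∈ (⊥ : Submodule (ZMod 3) (Fin k → ZMod 3)) := hle (hspan ▸ Submodule.mem_top)
        simpa using this
      have hspan1 : Submodule.span (ZMod 3) {(fun i => G i j : Fin k → ZMod 3)} = ⊤ := by
        apply Submodule.eq_top_of_finrank_eq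
        rw [finrank_span_singleton hj, Module.finrank_pi, Fintype.card_fin, hk1]
      have hxmem : x ∈ Submodule.span (ZMod 3) {(fun i => G i j : Fin k → ZMod 3)} := by
        rw [hspan1]; trivial
      obtain ⟨c, hc⟩ := Submodule.mem_span_singleton.mp hxmem
      have hc0 : c ≠ 0 := by
        rintro rfl
        exact hx (by rw [← hc, zero_smul])
      rcases (by decide : ∀ c : ZMod 3, c ≠ 0 → c = 1 ∨ c = 2) c hc0 with rfl | rfl
      · exact ⟨_, hmemc j, by rw [← hc, one_smul]⟩
      · refine ⟨_, hmemnc j, ?_⟩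
        rw [← hc]
        funext i
        show -G i j = (2 : ZMod 3) * G i j
        have : ∀ a : ZMod 3, -a = 2 * a := by decide
        exact this _
  · -- main case k ≥ 2
    have hQ : Module.finrank (ZMod 3) ((Fin k → ZMod 3) ⧸ W) = 2 := by
      have h1 := Submodule.finrank_quotient_add_finrank W
      rw [Module.finrank_pi, Fintype.card_fin] at h1
      omega
    obtain ⟨e⟩ : Nonempty (((Fin k → ZMod 3) ⧸ W) ≃ₗ[ZMod 3] (Fin 2 → ZMod 3)) := by
      apply FiniteDimensional.nonempty_linearEquiv_of_finrank_eq
      rw [hQ, Module.finrank_pi, Fintype.card_fin]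
    set φ : (Fin k → ZMod 3) →ₗ[ZMod 3] (Fin 2 → ZMod 3) := e.toLinearMap ∘ₗ W.mkQ with hφ
    have hker : ∀ w, φ w = 0 ↔ w ∈ W := by
      intro w
      rw [hφ, LinearMap.comp_apply]
      rw [show (e.toLinearMap (W.mkQ w) = 0) ↔ W.mkQ w = 0 from
        ⟨fun h => e.injective (by simpa using h), fun h => by rw [h]; simp⟩]
      rw [Submodule.mkQ_apply, Submodule.Quotient.mk_eq_zero]
    have hsurj : Function.Surjective φ := e.surjective.comp (Submodule.mkQ_surjective W)
    set f : (Fin k → ZMod 3) →ₗ[ZMod 3] ZMod 3 := (LinearMap.proj 0).comp φ with hf_def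
    set g : (Fin k → ZMod 3) →ₗ[ZMod 3] ZMod 3 := (LinearMap.proj 1).comp φ with hg_def
    have hfapp : ∀ w, f w = φ w 0 := fun w => rfl
    have hgapp : ∀ w, g w = φ w 1 := fun w => rfl
    have hcomb : ∀ a b : ZMod 3, (a ≠ 0 ∨ b ≠ 0) → ∃ w, a * f w + b * g w ≠ 0 := by
      intro a b hab
      rcases hab with h | h
      · obtain ⟨w, hw⟩ := hsurj ![1, 0]
        refine ⟨w, ?_⟩
        rw [hfapp, hgapp, hw]
        simpa using h
      · obtain ⟨w, hw⟩ := hsurj ![0, 1]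
        refine ⟨w, ?_⟩
        rw [hfapp, hgapp, hw]
        simpa using h
    have hnz : ∀ a b : ZMod 3, (a ≠ 0 ∨ b ≠ 0) →
        ∀ h : (Fin k → ZMod 3) →ₗ[ZMod 3] ZMod 3, (∀ w, h w = a * f w + b * g w) → h ≠ 0 := by
      intro a b hab h hh h0
      obtain ⟨w, hw⟩ := hcomb a b hab
      exact hw (by rw [← hh w, h0]; rfl)
    have hf0 : f ≠ 0 := hnz 1 0 (Or.inl one_ne_zero) f (fun w => by ring)
    have hg0 : g ≠ 0 := hnz 0 1 (Or.inr one_ne_zero) g (fun w => by ring)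
    have hfg0 : f + g ≠ 0 := hnz 1 1 (Or.inl one_ne_zero) (f + g) (fun w => by
      simp only [LinearMap.add_apply]; ring)
    -- reduce goal to finding b with f b = f x and g b = g x
    have hsuff : ∀ b : Fin k → ZMod 3, f b = f x → g b = g x → b - x ∈ W := by
      intro b h0 h1
      rw [← hker]
      have e0 : φ b 0 = φ x 0 := by rw [← hfapp, ← hfapp, h0]
      have e1 : φ b 1 = φ x 1 := by rw [← hgapp, ← hgapp, h1]
      have : φ b = φ x := by
        funext i
        fin_cases i
        · exact e0
        · exact e1
      rw [map_sub, this, sub_self]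
    have hsg : ∀ a α : ZMod 3, a ≠ 0 → α ≠ 0 → a = α ∨ a = -α := by decide
    set α := f x with hα
    set β := g x with hβ
    rcases (by decide : ∀ α β : ZMod 3, (α = 0 ∧ β = 0) ∨ (α ≠ 0 ∧ β = 0) ∨ (α = 0 ∧ β ≠ 0)
        ∨ (α ≠ 0 ∧ β ≠ 0 ∧ β = α) ∨ (α ≠ 0 ∧ β ≠ 0 ∧ β = -α)) α β with
      ⟨h1, h2⟩ | ⟨h1, h2⟩ | ⟨h1, h2⟩ | ⟨h1, h2, h3⟩ | ⟨h1, h2, h3⟩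
    · exact ⟨0, hmem0, hsuff 0 (by rw [map_zero, h1]) (by rw [map_zero, h2])⟩
    · -- α ≠ 0, β = 0 : use pair (f, f+g)
      obtain ⟨j, hj1, hj2⟩ := hT f (f + g) hf0 hfg0
        (hnz 2 1 (Or.inr one_ne_zero) (f + (f + g)) (fun w => by
          simp only [LinearMap.add_apply]; ring))
      rw [LinearMap.add_apply] at hj1
      have hgc : g (fun i => G i j) = 0 := left_eq_add.mp hj1
      rcases hsg (f (fun i => G i j)) α hj2 h1 with hc | hc
      · exact ⟨_, hmemc j, hsuff _ hc (by rw [hgc, h2])⟩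
      · exact ⟨_, hmemnc j, hsuff _ (by rw [map_neg, hc, neg_neg])
          (by rw [map_neg, hgc, neg_zero, h2])⟩
    · -- α = 0, β ≠ 0 : use pair (g, f+g)
      obtain ⟨j, hj1, hj2⟩ := hT g (f + g) hg0 hfg0
        (hnz 1 2 (Or.inl one_ne_zero) (g + (f + g)) (fun w => by
          simp only [LinearMap.add_apply]; ring))
      rw [LinearMap.add_apply] at hj1
      have hfc : f (fun i => G i j) = 0 := by
        have h' : g (fun i => G i j) = f (fun i => G i j) + g (fun i => G i j) := hj1
        exact right_eq_add.mp h'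
      rcases hsg (g (fun i => G i j)) β hj2 h2 with hc | hc
      · exact ⟨_, hmemc j, hsuff _ (by rw [hfc, h1]) hc⟩
      · exact ⟨_, hmemnc j, hsuff _ (by rw [map_neg, hfc, neg_zero, h1])
          (by rw [map_neg, hc, neg_neg])⟩
    · -- α ≠ 0, β = α : use pair (f, g)
      obtain ⟨j, hj1, hj2⟩ := hT f g hf0 hg0 hfg0
      rcases hsg (f (fun i => G i j)) α hj2 h1 with hc | hc
      · exact ⟨_, hmemc j, hsuff _ hc (by rw [← hj1, hc, h3])⟩
      · exact ⟨_, hmemnc j, hsuff _ (by rw [map_neg, hc, neg_neg])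
          (by rw [map_neg, ← hj1, hc, neg_neg, h3])⟩
    · -- α ≠ 0, β = -α : use pair (f, -g)
      obtain ⟨j, hj1, hj2⟩ := hT f (-g) hf0 (fun h' => hg0 (neg_eq_zero.mp h'))
        (hnz 1 2 (Or.inl one_ne_zero) (f + -g) (fun w => by
          simp only [LinearMap.add_apply, LinearMap.neg_apply]
          exact (by decide : ∀ a b : ZMod 3, a + -b = 1 * a + 2 * b) _ _))
      rw [LinearMap.neg_apply] at hj1
      have hgc : g (fun i => G i j) = -(f (fun i => G i j)) := by
        rw [← neg_eq_iff_eq_neg] at hj1 ⊢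
        rw [← hj1, neg_neg]
      rcases hsg (f (fun i => G i j)) α hj2 h1 with hc | hc
      · exact ⟨_, hmemc j, hsuff _ hc (by rw [hgc, hc, h3])⟩
      · exact ⟨_, hmemnc j, hsuff _ (by rw [map_neg, hc, neg_neg])
          (by rw [map_neg, hgc, hc, neg_neg, h3])⟩



theorem backward (G : Matrix (Fin k) (Fin n) (ZMod 3))
    (hvan : ∀ f : (Fin k → ZMod 3) →ₗ[ZMod 3] ZMod 3, (∀ j, f (fun i => G i j) = 0) → f = 0)
    (hB : ∀ W : Submodule (ZMod 3) (Fin k → ZMod 3), Module.finrank (ZMod 3) W = k - 2 →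
        ∀ x : Fin k → ZMod 3,
          ∃ b ∈ ({0} ∪ Set.range (fun j i => G i j) ∪
              -Set.range (fun j i => G i j) : Set (Fin k → ZMod 3)),
            b - x ∈ W) :
    ∀ f g : (Fin k → ZMod 3) →ₗ[ZMod 3] ZMod 3, f ≠ 0 → g ≠ 0 → f + g ≠ 0 →
        ∃ j, f (fun i => G i j) = g (fun i => G i j) ∧ f (fun i => G i j) ≠ 0 := by
  intro f g hf hg hfg
  by_cases hEq : g = f
  · subst hEq
    rcases Classical.em (∃ j, g (fun i => G i j) ≠ 0) with ⟨j, hj⟩ | hno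
    · exact ⟨j, rfl, hj⟩
    · push_neg at hno
      exact absurd (hvan g hno) hg
  · -- f, g independent; build surjective φ = (f, g)
    obtain ⟨w0, hw0⟩ : ∃ w, f w ≠ 0 := by
      by_contra h; push_neg at h; exact hf (LinearMap.ext h)
    have hsq : ∀ a : ZMod 3, a ≠ 0 → a * a = 1 := by decide
    set w1 : Fin k → ZMod 3 := (f w0) • w0 with hw1_def
    have hfw1 : f w1 = 1 := by
      rw [hw1_def, _root_.map_smul, smul_eq_mul, hsq _ hw0]
    set t : ZMod 3 := g w1 with ht_def
    have hh : g - t • f ≠ 0 := by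
      intro h0
      have hgt : g = t • f := by rwa [sub_eq_zero] at h0
      rcases (by decide : ∀ c : ZMod 3, c = 0 ∨ c = 1 ∨ c = 2) t with h | h | h
      · rw [h, zero_smul] at hgt; exact hg hgt
      · rw [h, one_smul] at hgt; exact hEq hgt
      · apply hfg
        refine LinearMap.ext fun w => ?_
        rw [LinearMap.add_apply, hgt, h]
        show f w + (2 : ZMod 3) • f w = 0
        rw [smul_eq_mul]
        exact (by decide : ∀ a : ZMod 3, a + 2 * a = 0) _
    obtain ⟨w2a, hw2a⟩ : ∃ w, (g - t • f) w ≠ 0 := by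
      by_contra h; push_neg at h; exact hh (LinearMap.ext h)
    rw [LinearMap.sub_apply, LinearMap.smul_apply, smul_eq_mul] at hw2a
    set w2b : Fin k → ZMod 3 := w2a - (f w2a) • w1 with hw2b_def
    have hfw2b : f w2b = 0 := by
      rw [hw2b_def, map_sub, _root_.map_smul, smul_eq_mul, hfw1, mul_one, sub_self]
    have hgw2b : g w2b ≠ 0 := by
      rw [hw2b_def, map_sub, _root_.map_smul, smul_eq_mul, ← ht_def]
      intro h0
      apply hw2a
      rw [sub_eq_zero] at h0
      rw [h0]; ring
    set w2 : Fin k → ZMod 3 := (g w2b) • w2b with hw2_def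
    have hgw2 : g w2 = 1 := by rw [hw2_def, _root_.map_smul, smul_eq_mul, hsq _ hgw2b]
    have hfw2 : f w2 = 0 := by rw [hw2_def, _root_.map_smul, smul_eq_mul, hfw2b, mul_zero]
    set φ : (Fin k → ZMod 3) →ₗ[ZMod 3] (Fin 2 → ZMod 3) := LinearMap.pi ![f, g] with hφ_def
    have hφ0 : ∀ w, φ w 0 = f w := fun w => rfl
    have hφ1 : ∀ w, φ w 1 = g w := fun w => rfl
    have hsurj : Function.Surjective φ := by
      intro v
      refine ⟨v 0 • w1 + (v 1 - v 0 * t) • w2, ?_⟩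
      funext i
      fin_cases i
      · show f _ = v 0
        rw [map_add, _root_.map_smul, hfw1, _root_.map_smul, hfw2, smul_eq_mul, smul_eq_mul]
        ring
      · show g _ = v 1
        rw [map_add, _root_.map_smul, ← ht_def, _root_.map_smul, hgw2, smul_eq_mul, smul_eq_mul]
        ring
    have hWrank : Module.finrank (ZMod 3) (LinearMap.ker φ) = k - 2 := by
      have h1 := LinearMap.finrank_range_add_finrank_ker φ
      rw [LinearMap.range_eq_top.mpr hsurj, finrank_top, Module.finrank_pi, Module.finrank_pi,
        Fintype.card_fin, Fintype.card_fin] at h1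
      omega
    obtain ⟨x, hx⟩ := hsurj (fun _ => 1)
    obtain ⟨b, hbS, hbW⟩ := hB (LinearMap.ker φ) hWrank x
    have hφb : φ b = fun _ => 1 := by
      rw [LinearMap.mem_ker, map_sub, sub_eq_zero] at hbW
      rw [hbW, hx]
    have hfb : f b = 1 := by rw [← hφ0, hφb]
    have hgb : g b = 1 := by rw [← hφ1, hφb]
    rcases hbS with (hb0 | ⟨j, hj⟩) | hbneg
    · rw [Set.mem_singleton_iff] at hb0
      rw [hb0, map_zero] at hfb
      exact absurd hfb (by decide)
    · refine ⟨j, ?_, ?_⟩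
      · show f ((fun j i => G i j) j) = g ((fun j i => G i j) j)
        rw [hj, hfb, hgb]
      · show f ((fun j i => G i j) j) ≠ 0
        rw [hj, hfb]; decide
    · rw [Set.mem_neg] at hbneg
      obtain ⟨j, hj⟩ := hbneg
      have hcb : (fun i => G i j) = -b := by
        have : (fun j i => G i j) j = -b := hj
        exact this
      refine ⟨j, ?_, ?_⟩
      · rw [hcb, map_neg, map_neg, hfb, hgb]
      · rw [hcb, map_neg, hfb]; decide

end TB

/-- Let `G ∈ 𝔽_3^{k×n}` have rank `k`, let `B` be its set of columns and `C` its row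
space. Then `C` is a linear trifferent code if and only if `{0} ∪ B ∪ (-B)` is an affine
`2`-blocking set in `𝔽_3^k`. -/
theorem trifferent_iff_blocking (k n : ℕ)
    (G : Matrix (Fin k) (Fin n) (ZMod 3)) (hrank : G.rank = k) :
    (∀ x ∈ Set.range fun u : Fin k → ZMod 3 => Matrix.vecMul u G,
     ∀ y ∈ Set.range fun u : Fin k → ZMod 3 => Matrix.vecMul u G,
     ∀ z ∈ Set.range fun u : Fin k → ZMod 3 => Matrix.vecMul u G,
       x ≠ y → y ≠ z → x ≠ z →
         ∃ i : Fin n, ({x i, y i, z i} : Set (ZMod 3)) = Set.univ)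
    ↔ (∀ W : Submodule (ZMod 3) (Fin k → ZMod 3), Module.finrank (ZMod 3) W = k - 2 →
        ∀ x : Fin k → ZMod 3,
          ∃ b ∈ ({0} ∪ Set.range (fun j i => G i j) ∪
              -Set.range (fun j i => G i j) : Set (Fin k → ZMod 3)),
            b - x ∈ W) := by
  rw [TB.key G hrank]
  constructor
  · intro hT
    exact TB.forward G hrank hT (TB.cols_span G hrank)
  · intro hB
    exact TB.backward G (TB.vanish_zero G hrank) hB
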